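/- Let r̄₁, r₂ > 0 and let ξ₁, ξ₂ ∈ sp(2) with z₁ = z₂ = 0 (i.e., ξᵢ = ((xᵢ, yᵢ), (-\bar{yᵢ}, 0)) with xᵢ pure imaginary). If α₁ = y₂\bar{y₁} - y₁\bar{y₂} = 0, β₁ = x₁x₂ - x₂x₁ = 0, and γ₁ = x₁y₂ - x₂y₁ = 0, then ξ₁ and ξ₂ are linearly dependent over ℝ. -/

import Mathlib

open Quaternion

/-- Algebraic core of quasi-positivity of the curvature of Σ⁷_θ at the identity
coset: for ξᵢ = ((xᵢ,yᵢ),(-conj yᵢ,0)) with xᵢ pure imaginary, the vanishing of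
α₁, β₁ and γ₁ forces ξ₁ and ξ₂ to be linearly dependent over ℝ. -/
theorem horizontal_zero_curvature_dependent
    (rb₁ r₂ : ℝ) (h₁ : 0 < rb₁) (h₂ : 0 < r₂)
    (x₁ y₁ x₂ y₂ : ℍ[ℝ]) (hx₁ : x₁.re = 0) (hx₂ : x₂.re = 0)
    (hα : y₂ * star y₁ - y₁ * star y₂ = 0)
    (hβ : x₁ * x₂ - x₂ * x₁ = 0)
    (hγ : x₁ * y₂ - x₂ * y₁ = 0) :
    ∃ a b : ℝ, (a, b) ≠ (0, 0) ∧ a • x₁ + b • x₂ = 0 ∧ a • y₁ + b • y₂ = 0 := by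
  rw [sub_eq_zero] at hα hβ hγ
  by_cases hx1 : x₁ = 0
  · subst hx1
    by_cases hx2 : x₂ = 0
    · subst hx2
      by_cases hy1 : y₁ = 0
      · exact ⟨1, 0, by simp, by simp, by simp [hy1]⟩
      · -- y₂ * star y₁ is self-adjoint, hence real
        have hsa : star (y₂ * star y₁) = y₂ * star y₁ := by
          rw [star_mul, star_star, hα]
        rw [Quaternion.star_eq_self] at hsa
        have key : (Quaternion.normSq y₁) • y₂ = (y₂ * star y₁).re • y₁ := by
          have := congrArg (· * y₁) hsa
          rw [mul_assoc, Quaternion.star_mul_self] at this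
          rw [Quaternion.mul_coe_eq_smul] at this
          rw [this, Quaternion.coe_mul_eq_smul]
        refine ⟨(y₂ * star y₁).re, -(Quaternion.normSq y₁), ?_, by simp, ?_⟩
        · simp only [ne_eq, Prod.mk.injEq, not_and]
          intro _ h
          rw [neg_eq_zero, Quaternion.normSq_eq_zero] at h
          exact hy1 h
        · rw [neg_smul, ← key, add_neg_cancel]
    · -- x₂ ≠ 0, so from hγ : 0 = x₂ * y₁ we get y₁ = 0
      have : x₂ * y₁ = 0 := by simpa using hγ.symm
      have hy1 : y₁ = 0 := by
        rcases mul_eq_zero.mp this with h | h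
        · exact absurd h hx2
        · exact h
      exact ⟨1, 0, by simp, by simp, by simp [hy1]⟩
  · -- x₁ ≠ 0 : x₁ * x₂ is self-adjoint (both pure, commuting) hence real
    have hs1 : star x₁ = -x₁ := Quaternion.star_eq_neg.mpr hx₁
    have hs2 : star x₂ = -x₂ := Quaternion.star_eq_neg.mpr hx₂
    have hsa : star (x₁ * x₂) = x₁ * x₂ := by
      rw [star_mul, hs1, hs2, neg_mul_neg, hβ]
    rw [Quaternion.star_eq_self] at hsa
    set q : ℝ := (x₁ * x₂).re with hq
    have key : (Quaternion.normSq x₁) • x₂ = (-q) • x₁ := by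
      have h0 : star x₁ * (x₁ * x₂) = star x₁ * ((q : ℝ) : ℍ[ℝ]) := by rw [hsa]
      rw [← mul_assoc, Quaternion.star_mul_self, hs1,
        Quaternion.coe_mul_eq_smul, Quaternion.mul_coe_eq_smul] at h0
      rw [h0, smul_neg, ← neg_smul]
    set n : ℝ := Quaternion.normSq x₁ with hn
    have hn0 : n ≠ 0 := by simpa [hn, Quaternion.normSq_eq_zero] using hx1
    have hx2eq : x₂ = (-q / n) • x₁ := by
      have := congrArg (fun z => (n⁻¹ : ℝ) • z) key
      simp only [smul_smul, inv_mul_cancel₀ hn0, one_smul] at this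
      rw [this, div_eq_mul_inv, mul_comm, mul_smul]
    have hy2eq : y₂ = (-q / n) • y₁ := by
      have h3 : x₁ * y₂ = x₁ * ((-q / n) • y₁) := by
        rw [hγ, hx2eq, mul_smul_comm, smul_mul_assoc]
      exact mul_left_cancel₀ hx1 h3
    refine ⟨-q / n, -1, ?_, ?_, ?_⟩
    · simp only [ne_eq, Prod.mk.injEq, not_and]
      intro _ h; norm_num at h
    · rw [hx2eq]; simp
    · rw [hy2eq]; simp
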